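/- Let $\Phi$ be a real $m\times n$ matrix with no all-zero row and no all-zero column, $\xi_c=\max_{\alpha\in\{\pm1\}^m,\beta\in\{\pm1\}^n}\alpha^T\Phi\beta$, and suppose there exist diagonal matrices $\Sigma\succ0$, $\Lambda\succ0$ with $\tfrac12(\operatorname{tr}\Sigma+\operatorname{tr}\Lambda)=\xi_c$ and $\begin{pmatrix}\Sigma&-\Phi\\ -\Phi^T&\Lambda\end{pmatrix}\succeq 0$ (i.e., the dual SDP value equals the classical bias, meaning there is no quantum advantage). Then every pair of sign vectors $(\alpha,\beta)$ achieving $\alpha^T\Phi\beta=\xi_c$ satisfies $\beta=\Lambda^{-1}\Phi^T\alpha$, with the matrix $F=\Lambda^{-1}\Phi^T$ independent of the optimal pair chosen. -/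

import Mathlib

open Matrix

/-- No quantum advantage forces optimal classical strategies to be linearly
related: if an exhaustive XOR game matrix `Φ` admits a dual-feasible diagonal
pair `(Σ, Λ)` whose value `½(trΣ + trΛ)` equals the classical bias `ξc`, then
every optimal pair of sign vectors `(α, β)` satisfies `β = Λ⁻¹Φᵀα`. -/
theorem stmt7 (m n : ℕ) (Φ : Matrix (Fin m) (Fin n) ℝ)
    (hrow : ∀ x, ∃ y, Φ x y ≠ 0) (hcol : ∀ y, ∃ x, Φ x y ≠ 0)
    (ξc : ℝ)
    (hξc : IsGreatest {v : ℝ | ∃ α : Fin m → ℝ, ∃ β : Fin n → ℝ,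
        (∀ x, α x = 1 ∨ α x = -1) ∧ (∀ y, β y = 1 ∨ β y = -1) ∧
        v = ∑ x, ∑ y, α x * Φ x y * β y} ξc)
    (σ : Fin m → ℝ) (lam : Fin n → ℝ)
    (hσ : ∀ x, 0 < σ x) (hlam : ∀ y, 0 < lam y)
    (hval : (1 / 2) * ((∑ x, σ x) + ∑ y, lam y) = ξc)
    (hPSD : (Matrix.fromBlocks (Matrix.diagonal σ) (-Φ) (-Φᵀ)
        (Matrix.diagonal lam)).PosSemidef) :
    ∀ α : Fin m → ℝ, ∀ β : Fin n → ℝ,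
      (∀ x, α x = 1 ∨ α x = -1) → (∀ y, β y = 1 ∨ β y = -1) →
      (∑ x, ∑ y, α x * Φ x y * β y) = ξc →
      β = ((Matrix.diagonal lam)⁻¹ * Φᵀ).mulVec α := by
  intro α β hα hβ hopt
  set M := Matrix.fromBlocks (Matrix.diagonal σ) (-Φ) (-Φᵀ) (Matrix.diagonal lam) with hM
  set v : Fin m ⊕ Fin n → ℝ := Sum.elim α β with hv
  have hα2 : ∀ x, α x * α x = 1 := fun x => by rcases hα x with h | h <;> rw [h] <;> ring
  have hβ2 : ∀ y, β y * β y = 1 := fun y => by rcases hβ y with h | h <;> rw [h] <;> ring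
  -- the quadratic form vanishes at v
  have hquad : star v ⬝ᵥ M *ᵥ v = 0 := by
    have h1 : v ∘ Sum.inl = α := rfl
    have h2 : v ∘ Sum.inr = β := rfl
    rw [hM, fromBlocks_mulVec, h1, h2]
    have hsv : star v = v := by
      ext i; simp
    rw [hsv, hv]
    have : (Sum.elim α β ⬝ᵥ Sum.elim
        (Matrix.diagonal σ *ᵥ α + (-Φ) *ᵥ β)
        ((-Φᵀ) *ᵥ α + Matrix.diagonal lam *ᵥ β)) =
        α ⬝ᵥ (Matrix.diagonal σ *ᵥ α + (-Φ) *ᵥ β)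
        + β ⬝ᵥ ((-Φᵀ) *ᵥ α + Matrix.diagonal lam *ᵥ β) := by
      simp [dotProduct, Fintype.sum_sum_type]
    rw [this, dotProduct_add, dotProduct_add]
    have e1 : α ⬝ᵥ Matrix.diagonal σ *ᵥ α = ∑ x, σ x := by
      simp only [dotProduct, mulVec_diagonal]
      refine Finset.sum_congr rfl fun x _ => ?_
      rw [mul_comm, mul_assoc, hα2 x, mul_one]
    have e2 : β ⬝ᵥ Matrix.diagonal lam *ᵥ β = ∑ y, lam y := by
      simp only [dotProduct, mulVec_diagonal]
      refine Finset.sum_congr rfl fun y _ => ?_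
      rw [mul_comm, mul_assoc, hβ2 y, mul_one]
    have e3 : α ⬝ᵥ (-Φ) *ᵥ β = -ξc := by
      rw [← hopt]
      simp [dotProduct, mulVec, Finset.mul_sum, Finset.sum_mul, mul_assoc,
        ← Finset.sum_neg_distrib]
    have e4 : β ⬝ᵥ (-Φᵀ) *ᵥ α = -ξc := by
      rw [← hopt]
      rw [Finset.sum_comm]
      simp only [dotProduct, mulVec, Matrix.neg_apply, transpose_apply, dotProduct,
        Finset.mul_sum]
      rw [← Finset.sum_neg_distrib]
      refine Finset.sum_congr rfl fun y _ => ?_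
      rw [← Finset.sum_neg_distrib]
      refine Finset.sum_congr rfl fun x _ => ?_
      ring
    rw [e1, e2, e3, e4]
    linarith
  have hker : M *ᵥ v = 0 := (hPSD.dotProduct_mulVec_zero_iff v).mp hquad
  rw [hM, fromBlocks_mulVec] at hker
  have h2 : ((-Φᵀ) *ᵥ (v ∘ Sum.inl) + Matrix.diagonal lam *ᵥ (v ∘ Sum.inr)) = 0 := by
    funext y
    have := congrFun hker (Sum.inr y)
    simpa using this
  have h1 : v ∘ Sum.inl = α := rfl
  have h2' : v ∘ Sum.inr = β := rfl
  rw [h1, h2'] at h2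
  have hlamne : ∀ y, lam y ≠ 0 := fun y => (hlam y).ne'
  funext y
  have hy : -(Φᵀ *ᵥ α) y + lam y * β y = 0 := by
    have := congrFun h2 y
    simpa [mulVec_diagonal, neg_mulVec] using this
  have hβy : β y = (lam y)⁻¹ * (Φᵀ *ᵥ α) y := by
    rw [inv_mul_eq_div, eq_div_iff (hlamne y)]
    linarith
  rw [hβy]
  have hdi : (Matrix.diagonal lam)⁻¹ = Matrix.diagonal (fun y => (lam y)⁻¹) := by
    apply Matrix.inv_eq_right_inv
    rw [diagonal_mul_diagonal]
    have : (fun y => lam y * (lam y)⁻¹) = fun _ => (1 : ℝ) :=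
      funext fun y => mul_inv_cancel₀ (hlamne y)
    exact (by rw [this]; exact diagonal_one)
  rw [hdi, ← mulVec_mulVec]
  simp [mulVec_diagonal]
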